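/- Let n ≥ 1 and let w ∈ FreeGroup (Fin n) with w ≠ 1. Let σ : FreeGroup (Fin n) →* FreeGroup (Fin n) be the substitution endomorphism determined by σ(x₀) = w and σ(x_i) = x_i for i ≠ 0 (i.e., σ = FreeGroup.lift (Function.update FreeGroup.of 0 w)). Then for every k ≥ 1, the k-fold iterate satisfies σ^[k] (FreeGroup.of 0) ≠ 1. (Equivalently: every Engel iteration of a word that is not freely trivial is not freely trivial.) -/

import Mathlib

namespace EngelAux

open FreeGroup Function

variable {α : Type} [DecidableEq α]

lemma lt_of_getElem? {L : List (α × Bool)} {k : ℕ} {a : α × Bool} (h : L[k]? = some a) :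
    k < L.length := by
  by_contra hk
  rw [List.getElem?_eq_none (Nat.le_of_not_lt hk)] at h
  simp at h

lemma not_adj {L : List (α × Bool)} (hred : FreeGroup.reduce L = L) {k : ℕ} {i : α} {b : Bool}
    (h1 : L[k]? = some (i, b)) (h2 : L[k+1]? = some (i, !b)) : False := by
  have hk1 : k + 1 < L.length := lt_of_getElem? h2
  have hk : k < L.length := lt_of_getElem? h1
  have e1 : L[k] = (i, b) := by rw [List.getElem?_eq_getElem hk] at h1; exact Option.some_injective _ h1
  have e2 : L[k+1] = (i, !b) := by rw [List.getElem?_eq_getElem hk1] at h2; exact Option.some_injective _ h2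
  have hsplit : L = L.take k ++ (i, b) :: (i, !b) :: L.drop (k+2) := by
    conv_lhs => rw [← List.take_append_drop k L]
    congr 1
    rw [List.drop_eq_getElem_cons hk, e1, List.drop_eq_getElem_cons hk1, e2]
  exact FreeGroup.reduce.not (p := False) (hred.trans hsplit)

variable (L : List (α × Bool)) (i : α)

def PT (p : ℕ) : Prop := 1 ≤ p ∧ L[p-1]? = some (i, true)
def PF (p : ℕ) : Prop := L[p]? = some (i, false)
def QT (q : ℕ) : Prop := L[q]? = some (i, true)
def QF (q : ℕ) : Prop := 1 ≤ q ∧ L[q-1]? = some (i, false)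

instance (p : ℕ) : Decidable (PT L i p) := by unfold PT; infer_instance
instance (p : ℕ) : Decidable (PF L i p) := by unfold PF; infer_instance
instance (q : ℕ) : Decidable (QT L i q) := by unfold QT; infer_instance
instance (q : ℕ) : Decidable (QF L i q) := by unfold QF; infer_instance

def Dp (p : ℕ) : Prop := PT L i p ∨ PF L i p
def Rq (q : ℕ) : Prop := QT L i q ∨ QF L i q

instance (p : ℕ) : Decidable (Dp L i p) := by unfold Dp; infer_instance
instance (q : ℕ) : Decidable (Rq L i q) := by unfold Rq; infer_instance

def hfun (p : Fin (L.length + 1)) : Fin (L.length + 1) :=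
  if PT L i p.val then ⟨p.val - 1, by have := p.isLt; omega⟩
  else if h : PF L i p.val then ⟨p.val + 1, by have := lt_of_getElem? h; omega⟩
  else p

def gfun (q : Fin (L.length + 1)) : Fin (L.length + 1) :=
  if h : QT L i q.val then ⟨q.val + 1, by have := lt_of_getElem? h; omega⟩
  else if QF L i q.val then ⟨q.val - 1, by have := q.isLt; omega⟩
  else q

variable {L i}

lemma hfun_spec (hred : FreeGroup.reduce L = L) {p : Fin (L.length + 1)} (hD : Dp L i p.val) :
    Rq L i (hfun L i p).val ∧ gfun L i (hfun L i p) = p := by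
  rcases hD with hPT | hPF
  · have h1 : hfun L i p = ⟨p.val - 1, by have := p.isLt; omega⟩ := by
      rw [hfun, if_pos hPT]
    rw [h1]
    have hQT : QT L i (p.val - 1) := hPT.2
    refine ⟨Or.inl hQT, ?_⟩
    have h1p := hPT.1
    rw [gfun, dif_pos hQT]
    exact Fin.ext (show p.val - 1 + 1 = p.val by omega)
  · by_cases hPT : PT L i p.val
    · exact absurd hPF (fun hB => not_adj hred (b := true) hPT.2
        (by simpa [Nat.sub_add_cancel hPT.1, PF] using hB))
    have h1 : hfun L i p = ⟨p.val + 1, by have := lt_of_getElem? hPF; omega⟩ := by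
      rw [hfun, if_neg hPT, dif_pos hPF]
    rw [h1]
    have hQF : QF L i (p.val + 1) := ⟨by omega, by simpa [PF] using hPF⟩
    have hQT : ¬ QT L i (p.val + 1) := fun hB => not_adj hred (b := false) hPF hB
    refine ⟨Or.inr hQF, ?_⟩
    rw [gfun, dif_neg hQT, if_pos hQF]
    exact Fin.ext (show p.val + 1 - 1 = p.val by omega)

lemma gfun_spec (hred : FreeGroup.reduce L = L) {q : Fin (L.length + 1)} (hR : Rq L i q.val) :
    Dp L i (gfun L i q).val ∧ hfun L i (gfun L i q) = q := by
  rcases hR with hQT | hQF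
  · have h1 : gfun L i q = ⟨q.val + 1, by have := lt_of_getElem? hQT; omega⟩ := by
      rw [gfun, dif_pos hQT]
    rw [h1]
    have hPT : PT L i (q.val + 1) := ⟨by omega, by simpa [QT] using hQT⟩
    refine ⟨Or.inl hPT, ?_⟩
    rw [hfun, if_pos hPT]
    exact Fin.ext (show q.val + 1 - 1 = q.val by omega)
  · by_cases hQT : QT L i q.val
    · exact absurd hQF (fun hB => not_adj hred (b := false) hB.2
        (by simpa [Nat.sub_add_cancel hB.1, QT] using hQT))
    have h1 : gfun L i q = ⟨q.val - 1, by have := q.isLt; omega⟩ := by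
      rw [gfun, dif_neg hQT, if_pos hQF]
    rw [h1]
    have hPF : PF L i (q.val - 1) := hQF.2
    have hPT : ¬ PT L i (q.val - 1) := by
      rintro ⟨hge, hget⟩
      exact not_adj hred (b := true) hget (by
        have : q.val - 1 - 1 + 1 = q.val - 1 := by omega
        rw [this]; exact hPF)
    refine ⟨Or.inr hPF, ?_⟩
    have h1q := hQF.1
    rw [hfun, if_neg hPT, dif_pos hPF]
    exact Fin.ext (show q.val - 1 + 1 = q.val by omega)

variable (L i)

def fFwd : (Fin (L.length + 1) ⊕ Fin (L.length + 1)) → (Fin (L.length + 1) ⊕ Fin (L.length + 1))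
  | .inl p => if Dp L i p.val then .inl (hfun L i p) else .inr p
  | .inr q => if Rq L i q.val then .inr (gfun L i q) else .inl q

def fBwd : (Fin (L.length + 1) ⊕ Fin (L.length + 1)) → (Fin (L.length + 1) ⊕ Fin (L.length + 1))
  | .inl z => if Rq L i z.val then .inl (gfun L i z) else .inr z
  | .inr t => if Dp L i t.val then .inr (hfun L i t) else .inl t

variable {L i}

lemma fwd_bwd (hred : FreeGroup.reduce L = L) (x) : fBwd L i (fFwd L i x) = x := by
  rcases x with p | q
  · by_cases hD : Dp L i p.val
    · rw [show fFwd L i (.inl p) = .inl (hfun L i p) from by rw [fFwd, if_pos hD]]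
      rw [fBwd, if_pos (hfun_spec hred hD).1, (hfun_spec hred hD).2]
    · rw [show fFwd L i (.inl p) = .inr p from by rw [fFwd, if_neg hD]]
      rw [fBwd, if_neg hD]
  · by_cases hR : Rq L i q.val
    · rw [show fFwd L i (.inr q) = .inr (gfun L i q) from by rw [fFwd, if_pos hR]]
      rw [fBwd, if_pos (gfun_spec hred hR).1, (gfun_spec hred hR).2]
    · rw [show fFwd L i (.inr q) = .inl q from by rw [fFwd, if_neg hR]]
      rw [fBwd, if_neg hR]

lemma bwd_fwd (hred : FreeGroup.reduce L = L) (x) : fFwd L i (fBwd L i x) = x := by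
  rcases x with z | t
  · by_cases hR : Rq L i z.val
    · rw [show fBwd L i (.inl z) = .inl (gfun L i z) from by rw [fBwd, if_pos hR]]
      rw [fFwd, if_pos (gfun_spec hred hR).1, (gfun_spec hred hR).2]
    · rw [show fBwd L i (.inl z) = .inr z from by rw [fBwd, if_neg hR]]
      rw [fFwd, if_neg hR]
  · by_cases hD : Dp L i t.val
    · rw [show fBwd L i (.inr t) = .inr (hfun L i t) from by rw [fBwd, if_pos hD]]
      rw [fFwd, if_pos (hfun_spec hred hD).1, (hfun_spec hred hD).2]
    · rw [show fBwd L i (.inr t) = .inl t from by rw [fBwd, if_neg hD]]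
      rw [fFwd, if_neg hD]

variable (L) in
def sperm (hred : FreeGroup.reduce L = L) (i : α) :
    Equiv.Perm (Fin (L.length + 1) ⊕ Fin (L.length + 1)) :=
  ⟨fFwd L i, fBwd L i, fwd_bwd hred, bwd_fwd hred⟩

lemma sperm_apply (hred : FreeGroup.reduce L = L) (x) : sperm L hred i x = fFwd L i x := rfl

lemma sperm_inv_apply (hred : FreeGroup.reduce L = L) (x) :
    (sperm L hred i)⁻¹ x = fBwd L i x := rfl

lemma sperm_apply_T (hred : FreeGroup.reduce L = L) {s : ℕ} (h : L[s]? = some (i, true))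
    (hs1 : s + 1 < L.length + 1) :
    sperm L hred i (.inl ⟨s+1, hs1⟩) = .inl ⟨s, by omega⟩ := by
  have hPT : PT L i (s+1) := ⟨by omega, by simpa using h⟩
  rw [sperm_apply, fFwd,
    if_pos (show Dp L i ((⟨s+1, hs1⟩ : Fin (L.length+1))).val from Or.inl hPT), hfun, if_pos hPT]
  exact congrArg Sum.inl (Fin.ext (show s + 1 - 1 = s by omega))

lemma sperm_inv_apply_F (hred : FreeGroup.reduce L = L) {s : ℕ} (h : L[s]? = some (i, false))
    (hs1 : s + 1 < L.length + 1) :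
    (sperm L hred i)⁻¹ (.inl ⟨s+1, hs1⟩) = .inl ⟨s, by omega⟩ := by
  have hQF : QF L i (s+1) := ⟨by omega, by simpa using h⟩
  have hQT : ¬ QT L i (s+1) := fun hB => not_adj hred (b := false) h hB
  rw [sperm_inv_apply, fBwd,
    if_pos (show Rq L i ((⟨s+1, hs1⟩ : Fin (L.length+1))).val from Or.inr hQF), gfun,
    dif_neg hQT, if_pos hQF]
  exact congrArg Sum.inl (Fin.ext (show s + 1 - 1 = s by omega))

lemma eval (hred : FreeGroup.reduce L = L) :
    ∀ d s, ∀ _hsd : s + d = L.length,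
    (List.prod ((L.drop s).map fun x => cond x.2 (sperm L hred x.1) (sperm L hred x.1)⁻¹))
      (Sum.inl ⟨L.length, by omega⟩) = Sum.inl ⟨s, by omega⟩ := by
  intro d
  induction d with
  | zero =>
    intro s hs
    have hs' : s = L.length := by omega
    subst hs'
    rw [List.drop_length]
    simp
  | succ d ih =>
    intro s hs
    have hslt : s < L.length := by omega
    rw [List.drop_eq_getElem_cons hslt]
    rcases hLs : L[s] with ⟨j, b⟩
    have hLs? : L[s]? = some (j, b) := by rw [List.getElem?_eq_getElem hslt, hLs]
    rw [List.map_cons, List.prod_cons, Equiv.Perm.mul_apply, ih (s+1) (by omega)]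
    cases b
    · exact sperm_inv_apply_F hred hLs? (by omega)
    · exact sperm_apply_T hred hLs? (by omega)

theorem exists_hom_ne_one (v : FreeGroup α) (hv : v ≠ 1) :
    ∃ (Q : Type) (_ : Group Q) (_ : Finite Q) (ψ : FreeGroup α →* Q), ψ v ≠ 1 := by
  have hred : FreeGroup.reduce v.toWord = v.toWord := FreeGroup.reduce_toWord v
  set L := v.toWord with hL
  have hlen : 0 < L.length := by
    rcases Nat.eq_zero_or_pos L.length with h | h
    · exact absurd (FreeGroup.toWord_eq_nil_iff.mp (List.length_eq_zero_iff.mp h)) hv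
    · exact h
  refine ⟨Equiv.Perm (Fin (L.length + 1) ⊕ Fin (L.length + 1)), inferInstance, inferInstance,
    FreeGroup.lift (sperm L hred), ?_⟩
  intro hψ
  have hv' : FreeGroup.lift (sperm L hred) v
      = List.prod (L.map fun x => cond x.2 (sperm L hred x.1) (sperm L hred x.1)⁻¹) := by
    conv_lhs => rw [← FreeGroup.mk_toWord (x := v)]
    exact FreeGroup.lift_mk
  have he := eval hred L.length 0 (by omega)
  rw [List.drop_zero] at he
  rw [← hv', hψ] at he
  simp only [Equiv.Perm.coe_one, id_eq] at he
  rw [Sum.inl.injEq, Fin.mk.injEq] at he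
  exact absurd he (by omega)


abbrev Q2 := Multiplicative (ZMod 2)

lemma hom_ext_of_closure {K Q : Type} [Group K] [Group Q] {S : Set K}
    (hS : Subgroup.closure S = ⊤) {f g : K →* Q} (h : Set.EqOn f g S) : f = g := by
  ext x
  have hx : x ∈ Subgroup.closure S := hS ▸ Subgroup.mem_top x
  induction hx using Subgroup.closure_induction with
  | mem y hy => exact h hy
  | one => simp
  | mul a b _ _ ha hb => simp [map_mul, ha, hb]
  | inv a _ ha => simp [map_inv, ha]

lemma finite_homs {K : Type} [Group K] {m : ℕ} (gens : Fin m → K)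
    (hgen : Subgroup.closure (Set.range gens) = ⊤) (Q : Type) [Group Q] [Finite Q] :
    Finite (K →* Q) := by
  have hinj : Function.Injective (fun φ : K →* Q => (fun s => φ (gens s) : Fin m → Q)) := by
    intro φ ψ h
    apply hom_ext_of_closure hgen
    rintro x ⟨s, rfl⟩
    exact congrFun h s
  exact Finite.of_injective _ hinj

lemma finite_of_finite_funs {β : Type} (hf : Finite (β → Q2)) : Finite β := by
  classical
  apply Finite.of_injective (fun g : β => (fun y => if y = g then Multiplicative.ofAdd (1 : ZMod 2) else 1 : β → Q2))
  intro g g' h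
  by_contra hne
  have h2 : (if g = g then Multiplicative.ofAdd (1 : ZMod 2) else 1)
      = (if g = g' then Multiplicative.ofAdd (1 : ZMod 2) else 1) := congrFun h g
  rw [if_pos rfl, if_neg (fun hh => hne hh)] at h2
  exact absurd h2 (by decide)

lemma card_homs_eq {K : Type} [Group K] {β : Type} [Finite β] (e : K ≃* FreeGroup β) :
    Nat.card (K →* Q2) = 2 ^ Nat.card β := by
  have e1 : (K →* Q2) ≃ (FreeGroup β →* Q2) :=
    { toFun := fun φ => φ.comp e.symm.toMonoidHom
      invFun := fun φ => φ.comp e.toMonoidHom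
      left_inv := by intro φ; ext x; simp
      right_inv := by intro φ; ext x; simp }
  have e2 : (FreeGroup β →* Q2) ≃ (β → Q2) := FreeGroup.lift.symm
  rw [Nat.card_congr (e1.trans e2), Nat.card_fun]
  congr 1
  rw [Nat.card_congr (Multiplicative.ofAdd (α := ZMod 2)).symm, Nat.card_zmod]

lemma card_homs_le {K K' : Type} [Group K] [Group K'] (φ : K →* K')
    (hφ : Function.Surjective φ) (hfin : Finite (K →* Q2)) :
    Nat.card (K' →* Q2) ≤ Nat.card (K →* Q2) :=
  Nat.card_le_card_of_injective (fun ψ : K' →* Q2 => ψ.comp φ)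
    (fun a b h => (MonoidHom.cancel_right hφ).mp h)

lemma freeGroup_hopfian {r : ℕ} (φ : FreeGroup (Fin r) →* FreeGroup (Fin r))
    (hs : Function.Surjective φ) : Function.Injective φ := by
  rw [injective_iff_map_eq_one]
  intro g hg
  by_contra hgne
  obtain ⟨Q, _, _, ψ, hψ⟩ := exists_hom_ne_one g hgne
  have hFin : Finite (FreeGroup (Fin r) →* Q) :=
    Finite.of_equiv _ (FreeGroup.lift (α := Fin r) (β := Q))
  have hinj : Function.Injective (fun χ : FreeGroup (Fin r) →* Q => χ.comp φ) :=
    fun a b h => (MonoidHom.cancel_right hs).mp h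
  obtain ⟨χ, hχ⟩ := (Finite.injective_iff_surjective.mp hinj) ψ
  apply hψ
  rw [← hχ]
  show χ (φ g) = 1
  rw [hg]
  exact map_one χ

lemma epi_injective {K K' : Type} [Group K] [Group K'] {β β' : Type} [Finite β] [Finite β']
    (e : K ≃* FreeGroup β) (e' : K' ≃* FreeGroup β') (hcard : Nat.card β = Nat.card β')
    (φ : K →* K') (hφ : Function.Surjective φ) : Function.Injective φ := by
  have : Fintype β := Fintype.ofFinite β
  have : Fintype β' := Fintype.ofFinite β'
  have hcard' : Fintype.card β' = Fintype.card β := by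
    rw [← Nat.card_eq_fintype_card, ← Nat.card_eq_fintype_card, hcard]
  let eβ : β ≃ Fin (Fintype.card β) := Fintype.equivFin β
  let eβ' : β' ≃ Fin (Fintype.card β) := (Fintype.equivFin β').trans (finCongr hcard')
  let q : K ≃* FreeGroup (Fin (Fintype.card β)) := e.trans (FreeGroup.freeGroupCongr eβ)
  let q' : K' ≃* FreeGroup (Fin (Fintype.card β)) := e'.trans (FreeGroup.freeGroupCongr eβ')
  let χ : FreeGroup (Fin (Fintype.card β)) →* FreeGroup (Fin (Fintype.card β)) :=
    q'.toMonoidHom.comp (φ.comp q.symm.toMonoidHom)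
  have hχs : Function.Surjective χ :=
    q'.surjective.comp (hφ.comp q.symm.surjective)
  have hχi : Function.Injective χ := freeGroup_hopfian χ hχs
  intro x y hxy
  have h1 : χ (q x) = χ (q y) := by
    show q' (φ (q.symm (q x))) = q' (φ (q.symm (q y)))
    rw [MulEquiv.symm_apply_apply, MulEquiv.symm_apply_apply, hxy]
  exact q.injective (hχi h1)

lemma closure_range_gens {G : Type} [Group G] {m : ℕ} (f : FreeGroup (Fin m) →* G) :
    Subgroup.closure (Set.range fun s : Fin m =>
      (⟨f (FreeGroup.of s), ⟨FreeGroup.of s, rfl⟩⟩ : f.range)) = ⊤ := by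
  apply Subgroup.map_injective f.range.subtype_injective
  rw [MonoidHom.map_closure]
  have h1 : f.range.subtype '' (Set.range fun s : Fin m =>
      (⟨f (FreeGroup.of s), ⟨FreeGroup.of s, rfl⟩⟩ : f.range)) = Set.range fun s : Fin m => f (FreeGroup.of s) := by
    rw [← Set.range_comp]
    rfl
  rw [h1]
  have h2 : Subgroup.map f.range.subtype ⊤ = f.range := by
    rw [← MonoidHom.range_eq_map, Subgroup.range_subtype]
  rw [h2]
  have h3 : f.range = Subgroup.map f ⊤ := MonoidHom.range_eq_map f
  rw [h3, ← FreeGroup.closure_range_of (Fin m), MonoidHom.map_closure, ← Set.range_comp]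
  rfl

lemma finite_generators {K : Type} [Group K] [IsFreeGroup K] (hf : Finite (K →* Q2)) :
    Finite (IsFreeGroup.Generators K) := by
  haveI := hf
  exact finite_of_finite_funs (Finite.of_equiv _ (IsFreeGroup.lift (H := Q2)).symm)

def Tpow {G : Type} [Group G] (σ : G →* G) : ℕ → (G →* G)
  | 0 => MonoidHom.id G
  | (m+1) => σ.comp (Tpow σ m)

lemma Tpow_apply {G : Type} [Group G] (σ : G →* G) (m : ℕ) (x : G) :
    Tpow σ m x = (⇑σ)^[m] x := by
  induction m with
  | zero => rfl
  | succ m ih =>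
    rw [Function.iterate_succ_apply']
    show σ (Tpow σ m x) = _
    rw [ih]

lemma Tpow_comp_apply {G : Type} [Group G] (σ : G →* G) (a b : ℕ) (x : G) :
    Tpow σ a (Tpow σ b x) = Tpow σ (a + b) x := by
  rw [Tpow_apply, Tpow_apply, Tpow_apply, Function.iterate_add_apply]

end EngelAux

open EngelAux in
/-- If a word `w` is not freely trivial, then none of its Engel iterations (obtained by
repeatedly substituting `w` for the variable `x₀`) is freely trivial. -/
theorem engel_iteration_ne_one (n : ℕ) [NeZero n] (w : FreeGroup (Fin n)) (hw : w ≠ 1)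
    (k : ℕ) (hk : 1 ≤ k) :
    (⇑(FreeGroup.lift (Function.update FreeGroup.of (0 : Fin n) w) :
        FreeGroup (Fin n) →* FreeGroup (Fin n)))^[k] (FreeGroup.of 0) ≠ 1 := by
  intro hcon
  classical
  set σ : FreeGroup (Fin n) →* FreeGroup (Fin n) :=
    FreeGroup.lift (Function.update FreeGroup.of (0 : Fin n) w) with hσdef
  have hσ0 : σ (FreeGroup.of 0) = w := by
    rw [hσdef, FreeGroup.lift_apply_of, Function.update_self]
  have hσi : ∀ i : Fin n, i ≠ 0 → σ (FreeGroup.of i) = FreeGroup.of i := by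
    intro i hi
    rw [hσdef, FreeGroup.lift_apply_of, Function.update_of_ne hi]
  have hex : ∃ m, (⇑σ)^[m+1] (FreeGroup.of 0) = 1 :=
    ⟨k - 1, by rwa [Nat.sub_add_cancel hk]⟩
  set j := Nat.find hex with hjdef
  have hj1 : (⇑σ)^[j+1] (FreeGroup.of 0) = 1 := Nat.find_spec hex
  have hjpos : 1 ≤ j := by
    by_contra hj0
    have hj0' : j = 0 := by omega
    apply hw
    rw [← hσ0]
    rw [hj0'] at hj1
    simpa using hj1
  have hne : (⇑σ)^[j] (FreeGroup.of 0) ≠ 1 := by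
    have hmin := Nat.find_min hex (m := j - 1) (by omega)
    intro hcontra
    apply hmin
    rwa [Nat.sub_add_cancel hjpos]
  have hTi : ∀ m, ∀ i : Fin n, i ≠ 0 → Tpow σ m (FreeGroup.of i) = FreeGroup.of i := by
    intro m
    induction m with
    | zero => intro i _; rfl
    | succ m ih =>
      intro i hi
      show σ (Tpow σ m (FreeGroup.of i)) = _
      rw [ih i hi, hσi i hi]
  -- the rank `n-1` retraction setup
  let β' := {i : Fin n // i ≠ 0}
  let ι : FreeGroup β' →* FreeGroup (Fin n) := FreeGroup.lift (fun s => FreeGroup.of s.val)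
  let ρ' : FreeGroup (Fin n) →* FreeGroup β' :=
    FreeGroup.lift (fun i => if h : i = 0 then 1 else FreeGroup.of (⟨i, h⟩ : β'))
  have hιof : ∀ s : β', ι (FreeGroup.of s) = FreeGroup.of s.val := fun s => FreeGroup.lift_apply_of
  have hρ'of : ∀ i : Fin n,
      ρ' (FreeGroup.of i) = if h : i = 0 then 1 else FreeGroup.of (⟨i, h⟩ : β') :=
    fun i => FreeGroup.lift_apply_of
  have hρ'ι : ∀ y, ρ' (ι y) = y := by
    have hcmp : ρ'.comp ι = MonoidHom.id _ := by
      apply FreeGroup.ext_hom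
      intro s
      show ρ' (ι (FreeGroup.of s)) = FreeGroup.of s
      rw [hιof s, hρ'of s.val, dif_neg s.prop]
    intro y
    exact DFunLike.congr_fun hcmp y
  have hTρ : ∀ x, Tpow σ (j+1) x = ι (ρ' x) := by
    have heq : Tpow σ (j+1) = ι.comp ρ' := by
      apply FreeGroup.ext_hom
      intro i
      show Tpow σ (j+1) (FreeGroup.of i) = ι (ρ' (FreeGroup.of i))
      by_cases hi : i = 0
      · subst hi
        rw [Tpow_apply, hj1, hρ'of, dif_pos rfl, map_one]
      · rw [hTi (j+1) i hi, hρ'of, dif_neg hi, hιof]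
    intro x
    exact DFunLike.congr_fun heq x
  have hιinj : Function.Injective ι := by
    intro a b hab
    have h2 := congrArg ρ' hab
    rwa [hρ'ι, hρ'ι] at h2
  have hrange : (Tpow σ (j+1)).range = ι.range := by
    apply le_antisymm
    · rintro x ⟨z, rfl⟩
      exact ⟨ρ' z, (hTρ z).symm⟩
    · rintro x ⟨y, rfl⟩
      exact ⟨ι y, by rw [hTρ (ι y), hρ'ι]⟩
  -- the three subgroups
  set KG : Subgroup (FreeGroup (Fin n)) := (Tpow σ (j+1)).range with hKG
  set KH : Subgroup (FreeGroup (Fin n)) := (Tpow σ j).range with hKH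
  set KH1 : Subgroup (FreeGroup (Fin n)) := (Tpow σ 1).range with hKH1
  have hfinH : Finite (↥KH →* Q2) := finite_homs _ (closure_range_gens (Tpow σ j)) Q2
  have hfinH1 : Finite (↥KH1 →* Q2) := finite_homs _ (closure_range_gens (Tpow σ 1)) Q2
  have hfinF : Finite (FreeGroup (Fin n) →* Q2) :=
    finite_homs FreeGroup.of (FreeGroup.closure_range_of (Fin n)) Q2
  haveI hgenH : Finite (IsFreeGroup.Generators ↥KH) := finite_generators hfinH
  haveI hgenH1 : Finite (IsFreeGroup.Generators ↥KH1) := finite_generators hfinH1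
  let eH : ↥KH ≃* FreeGroup (IsFreeGroup.Generators ↥KH) := IsFreeGroup.toFreeGroup ↥KH
  let eH1 : ↥KH1 ≃* FreeGroup (IsFreeGroup.Generators ↥KH1) := IsFreeGroup.toFreeGroup ↥KH1
  let eG : ↥KG ≃* FreeGroup β' :=
    (MulEquiv.subgroupCongr hrange).trans (MonoidHom.ofInjective hιinj).symm
  have hcardβ' : Nat.card β' = n - 1 := by
    rw [Nat.card_eq_fintype_card]
    rw [Fintype.card_subtype_compl, Fintype.card_subtype_eq, Fintype.card_fin]
  -- surjections
  have sFH : Function.Surjective (Tpow σ j).rangeRestrict := (Tpow σ j).rangeRestrict_surjective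
  have sFH1 : Function.Surjective (Tpow σ 1).rangeRestrict := (Tpow σ 1).rangeRestrict_surjective
  let φ23 : ↥KH1 →* ↥KH := MonoidHom.codRestrict ((Tpow σ (j-1)).comp KH1.subtype) KH (by
    rintro ⟨x, z, rfl⟩
    exact ⟨z, by
      show Tpow σ j z = Tpow σ (j-1) (Tpow σ 1 z)
      rw [Tpow_comp_apply, Nat.sub_add_cancel hjpos]⟩)
  have s23 : Function.Surjective φ23 := by
    rintro ⟨y, z, rfl⟩
    refine ⟨⟨Tpow σ 1 z, ⟨z, rfl⟩⟩, ?_⟩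
    apply Subtype.ext
    show Tpow σ (j-1) (Tpow σ 1 z) = Tpow σ j z
    rw [Tpow_comp_apply, Nat.sub_add_cancel hjpos]
  let φ34 : ↥KH →* ↥KG := MonoidHom.codRestrict ((Tpow σ 1).comp KH.subtype) KG (by
    rintro ⟨x, z, rfl⟩
    exact ⟨z, by
      show Tpow σ (j+1) z = Tpow σ 1 (Tpow σ j z)
      rw [Tpow_comp_apply, Nat.add_comm]⟩)
  have s34 : Function.Surjective φ34 := by
    rintro ⟨y, z, rfl⟩
    refine ⟨⟨Tpow σ j z, ⟨z, rfl⟩⟩, ?_⟩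
    apply Subtype.ext
    show Tpow σ 1 (Tpow σ j z) = Tpow σ (j+1) z
    rw [Tpow_comp_apply, Nat.add_comm]
  -- the witness that φ34 is not injective
  have hwit : ¬ Function.Injective φ34 := by
    intro hinj
    have h1 : φ34 ⟨Tpow σ j (FreeGroup.of 0), ⟨FreeGroup.of 0, rfl⟩⟩ = φ34 1 := by
      rw [map_one]
      apply Subtype.ext
      show Tpow σ 1 (Tpow σ j (FreeGroup.of 0)) = 1
      rw [Tpow_comp_apply, Nat.add_comm, Tpow_apply]
      exact hj1
    have h2 := hinj h1
    apply hne
    rw [← Tpow_apply]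
    exact congrArg Subtype.val h2
  -- rank computations
  have cG : Nat.card (↥KG →* Q2) = 2 ^ (n - 1) := by rw [card_homs_eq eG, hcardβ']
  have cH : Nat.card (↥KH →* Q2) = 2 ^ Nat.card (IsFreeGroup.Generators ↥KH) := card_homs_eq eH
  have cH1 : Nat.card (↥KH1 →* Q2) = 2 ^ Nat.card (IsFreeGroup.Generators ↥KH1) :=
    card_homs_eq eH1
  have cF : Nat.card (FreeGroup (Fin n) →* Q2) = 2 ^ n := by
    rw [card_homs_eq (MulEquiv.refl (FreeGroup (Fin n))), Nat.card_eq_fintype_card,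
      Fintype.card_fin]
  set rH := Nat.card (IsFreeGroup.Generators ↥KH) with hrHdef
  set rH1 := Nat.card (IsFreeGroup.Generators ↥KH1) with hrH1def
  have hGH : Nat.card (↥KG →* Q2) ≤ Nat.card (↥KH →* Q2) := card_homs_le φ34 s34 hfinH
  have hHF : Nat.card (↥KH →* Q2) ≤ Nat.card (FreeGroup (Fin n) →* Q2) :=
    card_homs_le (Tpow σ j).rangeRestrict sFH hfinF
  have hH1H : Nat.card (↥KH →* Q2) ≤ Nat.card (↥KH1 →* Q2) := card_homs_le φ23 s23 hfinH1
  have hH1F : Nat.card (↥KH1 →* Q2) ≤ Nat.card (FreeGroup (Fin n) →* Q2) :=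
    card_homs_le (Tpow σ 1).rangeRestrict sFH1 hfinF
  rw [cG, cH] at hGH
  rw [cH, cF] at hHF
  rw [cH, cH1] at hH1H
  rw [cH1, cF] at hH1F
  have hrHle : rH ≤ n := (Nat.pow_le_pow_iff_right one_lt_two).mp hHF
  have hrHge : n - 1 ≤ rH := (Nat.pow_le_pow_iff_right one_lt_two).mp hGH
  have hrHne : rH ≠ n - 1 := by
    intro hEq
    exact hwit (epi_injective eH eG (by rw [← hrHdef, hEq, hcardβ']) φ34 s34)
  have hn1 : 1 ≤ n := Nat.one_le_iff_ne_zero.mpr (NeZero.ne n)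
  have hrH : rH = n := by omega
  have hrH1 : rH1 = n := by
    have h1 := (Nat.pow_le_pow_iff_right one_lt_two).mp hH1H
    have h2 := (Nat.pow_le_pow_iff_right one_lt_two).mp hH1F
    omega
  have hinj1 : Function.Injective (Tpow σ 1).rangeRestrict :=
    epi_injective (MulEquiv.refl (FreeGroup (Fin n))) eH1
      (by rw [Nat.card_eq_fintype_card, Fintype.card_fin, ← hrH1def, hrH1]) _ sFH1
  have hσinj : Function.Injective ⇑σ := by
    intro a b hab
    exact hinj1 (Subtype.ext (hab : Tpow σ 1 a = Tpow σ 1 b))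
  apply hne
  apply hσinj
  rw [map_one]
  rw [← Function.iterate_succ_apply' (⇑σ) j (FreeGroup.of 0)]
  exact hj1
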